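/- arXiv:1702.08698 — 3 statements merged into one kernel-verified Lean document; each statement's English description precedes it below -/
import Mathlib

section
/- Let f satisfy Condition B with constant K, let φ be a branching mechanism satisfying Grey's condition, and let (Q_t)_{t≥0} be the transition semigroup of the CB-process with branching mechanism φ. Then for every t ≥ 0 and all real numbers y ≥ x > 0, one has ∫_{[0,∞)} f(z) Q_t(y,dz) ≤ K f(1 + y/x) · ∫_{[0,∞)} f(z) Q_t(x,dz) (as an inequality in [0,∞]). Consequently, ∫ f(z) Q_t(y,dz) < ∞ if and only if ∫ f(z) Q_t(x,dz) < ∞. -/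
open MeasureTheory Set Filter
open scoped ENNReal NNReal

noncomputable section

private lemma my_integrable_of_ae_bounded {μ : Measure ℝ} [IsFiniteMeasure μ] {f : ℝ → ℝ}
    (hf : AEStronglyMeasurable f μ) {C : ℝ} (h : ∀ᵐ w ∂μ, |f w| ≤ C) : Integrable f μ :=
  ⟨hf, HasFiniteIntegral.of_bounded (by simpa [Real.norm_eq_abs] using h)⟩

private lemma my_integral_poly_eq
    {μ ν : Measure ℝ} [IsProbabilityMeasure μ] [IsProbabilityMeasure ν]
    (hμ : ∀ᵐ w ∂μ, w ∈ Set.Icc (0:ℝ) 1) (hν : ∀ᵐ w ∂ν, w ∈ Set.Icc (0:ℝ) 1)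
    (h : ∀ n : ℕ, ∫ w, w ^ n ∂μ = ∫ w, w ^ n ∂ν) (p : Polynomial ℝ) :
    ∫ w, p.eval w ∂μ = ∫ w, p.eval w ∂ν := by
  have hint : ∀ (κ : Measure ℝ) , IsProbabilityMeasure κ → (∀ᵐ w ∂κ, w ∈ Set.Icc (0:ℝ) 1) →
      ∀ (c : ℝ) (n : ℕ), Integrable (fun w => c * w ^ n) κ := by
    intro κ hκ hae c n
    haveI := hκ
    refine my_integrable_of_ae_bounded ((measurable_const.mul (measurable_id.pow_const n)).aestronglyMeasurable) (C := |c|) ?_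
    filter_upwards [hae] with w hw
    rw [abs_mul]
    have : |w ^ n| ≤ 1 := by
      rw [abs_pow]
      exact pow_le_one₀ (abs_nonneg w) (abs_le.2 ⟨by linarith [hw.1], hw.2⟩)
    nlinarith [abs_nonneg c]
  have key : ∀ w : ℝ, p.eval w = ∑ i ∈ Finset.range (p.natDegree + 1), p.coeff i * w ^ i := by
    intro w; exact p.eval_eq_sum_range w
  simp_rw [key]
  rw [integral_finset_sum _ (fun i _ => hint μ ‹_› hμ _ i),
    integral_finset_sum _ (fun i _ => hint ν ‹_› hν _ i)]
  refine Finset.sum_congr rfl fun i _ => ?_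
  rw [integral_const_mul, integral_const_mul, h i]

private lemma my_laplace_ext {μ ν : Measure ℝ} [IsProbabilityMeasure μ] [IsProbabilityMeasure ν]
    (hμ0 : μ (Set.Iio 0) = 0) (hν0 : ν (Set.Iio 0) = 0)
    (h : ∀ l : ℝ, 0 ≤ l → ∫ z, Real.exp (-(l * z)) ∂μ = ∫ z, Real.exp (-(l * z)) ∂ν) :
    μ = ν := by
  have hμae : ∀ᵐ z ∂μ, 0 ≤ z := by
    rw [ae_iff]; simp only [not_le]; exact hμ0
  have hνae : ∀ᵐ z ∂ν, 0 ≤ z := by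
    rw [ae_iff]; simp only [not_le]; exact hν0
  set g : ℝ → ℝ := fun z => Real.exp (-(max z 0)) with hg_def
  have hg : Continuous g := Real.continuous_exp.comp (continuous_id.max continuous_const).neg
  set μ' := μ.map g with hμ'
  set ν' := ν.map g with hν'
  haveI : IsProbabilityMeasure μ' := Measure.isProbabilityMeasure_map hg.measurable.aemeasurable
  haveI : IsProbabilityMeasure ν' := Measure.isProbabilityMeasure_map hg.measurable.aemeasurable
  have hrange : ∀ z : ℝ, g z ∈ Set.Icc (0:ℝ) 1 := by
    intro z
    constructor
    · exact (Real.exp_pos _).le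
    · rw [← Real.exp_zero]
      exact Real.exp_le_exp.2 (by simp [le_max_right])
  have hμ'ae : ∀ᵐ w ∂μ', w ∈ Set.Icc (0:ℝ) 1 :=
    (ae_map_iff hg.measurable.aemeasurable measurableSet_Icc).2
      (Eventually.of_forall hrange)
  have hν'ae : ∀ᵐ w ∂ν', w ∈ Set.Icc (0:ℝ) 1 :=
    (ae_map_iff hg.measurable.aemeasurable measurableSet_Icc).2
      (Eventually.of_forall hrange)
  have hmom : ∀ (κ : Measure ℝ), IsProbabilityMeasure κ → (∀ᵐ z ∂κ, 0 ≤ z) →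
      ∀ n : ℕ, ∫ w, w ^ n ∂(κ.map g) = ∫ z, Real.exp (-((n:ℝ) * z)) ∂κ := by
    intro κ hκ hae n
    haveI := hκ
    rw [integral_map hg.measurable.aemeasurable (continuous_pow n).aestronglyMeasurable]
    refine integral_congr_ae ?_
    filter_upwards [hae] with z hz
    simp only [g, max_eq_left hz]
    rw [← Real.exp_nat_mul]
    ring_nf
  have hmome : ∀ n : ℕ, ∫ w, w ^ n ∂μ' = ∫ w, w ^ n ∂ν' := by
    intro n
    rw [hμ', hν', hmom μ ‹_› hμae n, hmom ν ‹_› hνae n]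
    exact h _ (Nat.cast_nonneg n)
  have hintc : ∀ (κ : Measure ℝ), IsProbabilityMeasure κ → (∀ᵐ w ∂κ, w ∈ Set.Icc (0:ℝ) 1) →
      ∀ F : ℝ → ℝ, Continuous F → Integrable F κ := by
    intro κ hκ hae F hF
    haveI := hκ
    obtain ⟨C, hC⟩ := isCompact_Icc.exists_bound_of_continuousOn hF.continuousOn
    refine my_integrable_of_ae_bounded hF.aestronglyMeasurable (C := C) ?_
    filter_upwards [hae] with w hw
    simpa [Real.norm_eq_abs] using hC w hw
  have hpoly := my_integral_poly_eq hμ'ae hν'ae hmome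
  have hbc : ∀ F : ℝ → ℝ, Continuous F → ∫ w, F w ∂μ' = ∫ w, F w ∂ν' := by
    intro F hF
    have hFμ : Integrable F μ' := hintc μ' ‹_› hμ'ae F hF
    have hFν : Integrable F ν' := hintc ν' ‹_› hν'ae F hF
    have main : ∀ ε : ℝ, 0 < ε → |(∫ w, F w ∂μ') - ∫ w, F w ∂ν'| ≤ 2 * ε := by
      intro ε hε
      obtain ⟨p, hp⟩ := exists_polynomial_near_of_continuousOn 0 1 F hF.continuousOn ε hε
      have hpμ : Integrable (fun w => p.eval w) μ' := hintc μ' ‹_› hμ'ae _ p.continuous_aeval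
      have hpν : Integrable (fun w => p.eval w) ν' := hintc ν' ‹_› hν'ae _ p.continuous_aeval
      have habs : ∀ (κ : Measure ℝ), IsProbabilityMeasure κ → (∀ᵐ w ∂κ, w ∈ Set.Icc (0:ℝ) 1) →
          Integrable F κ → Integrable (fun w => p.eval w) κ →
          |(∫ w, F w ∂κ) - ∫ w, p.eval w ∂κ| ≤ ε := by
        intro κ hκ hae hFi hpi
        haveI := hκ
        rw [← integral_sub hFi hpi]
        have habs0 : |∫ w, (F w - p.eval w) ∂κ| ≤ ∫ w, |F w - p.eval w| ∂κ := by
          simpa [Real.norm_eq_abs] using norm_integral_le_integral_norm (fun w => F w - p.eval w) (μ := κ)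
        refine habs0.trans ?_
        have h1 : ∫ w, |F w - p.eval w| ∂κ ≤ ∫ _, ε ∂κ := by
          refine integral_mono_ae (hFi.sub hpi).abs (integrable_const ε) ?_
          filter_upwards [hae] with w hw
          rw [abs_sub_comm]
          exact (hp w hw).le
        simpa using h1
      have hdec : (∫ w, F w ∂μ') - ∫ w, F w ∂ν'
          = ((∫ w, F w ∂μ') - ∫ w, p.eval w ∂μ')
            + ((∫ w, p.eval w ∂ν') - ∫ w, F w ∂ν') := by
        rw [hpoly p]; ring
      rw [hdec]
      have h1 := habs μ' ‹_› hμ'ae hFμ hpμ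
      have h2 := habs ν' ‹_› hν'ae hFν hpν
      rw [abs_sub_comm] at h2
      calc _ ≤ _ := abs_add_le _ _
        _ ≤ 2 * ε := by linarith
    by_contra hne
    have habs : 0 < |(∫ w, F w ∂μ') - ∫ w, F w ∂ν'| := by
      rw [abs_pos, sub_ne_zero]; exact hne
    have := main (|(∫ w, F w ∂μ') - ∫ w, F w ∂ν'| / 4) (by linarith)
    linarith
  have hlint : ∀ F : BoundedContinuousFunction ℝ NNReal, ∫⁻ w, F w ∂μ' = ∫⁻ w, F w ∂ν' := by
    intro F
    have hFc : Continuous fun w => ((F w : ℝ)) := NNReal.continuous_coe.comp F.continuous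
    rw [lintegral_coe_eq_integral _ (hintc μ' ‹_› hμ'ae _ hFc),
      lintegral_coe_eq_integral _ (hintc ν' ‹_› hν'ae _ hFc), hbc _ hFc]
  have hext : μ' = ν' := ext_of_forall_lintegral_eq_of_IsFiniteMeasure hlint
  have hlog : Measurable (fun w : ℝ => -Real.log w) := Real.measurable_log.neg
  have hrec : ∀ (κ : Measure ℝ), κ (Set.Iio 0) = 0 →
      (κ.map g).map (fun w => -Real.log w) = κ := by
    intro κ hκ0
    rw [Measure.map_map hlog hg.measurable]
    have hcongr : (fun w => -Real.log w) ∘ g =ᵐ[κ] id := by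
      have hae : ∀ᵐ z ∂κ, 0 ≤ z := by rw [ae_iff]; simp only [not_le]; exact hκ0
      filter_upwards [hae] with z hz
      simp [g, Function.comp, max_eq_left hz, Real.log_exp]
    rw [Measure.map_congr hcongr, Measure.map_id]
  rw [← hrec μ hμ0, ← hrec ν hν0, ← hμ', ← hν', hext]

private lemma my_conv_laplace {μ ν : Measure ℝ} [IsProbabilityMeasure μ] [IsProbabilityMeasure ν]
    (l : ℝ) :
    ∫ z, Real.exp (-(l * z)) ∂((μ.prod ν).map (fun p => p.1 + p.2))
      = (∫ z, Real.exp (-(l * z)) ∂μ) * ∫ z, Real.exp (-(l * z)) ∂ν := by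
  have hsm : AEStronglyMeasurable (fun z : ℝ => Real.exp (-(l * z)))
      ((μ.prod ν).map fun p : ℝ × ℝ => p.1 + p.2) :=
    Continuous.aestronglyMeasurable (by continuity)
  rw [integral_map (show Measurable (fun p : ℝ × ℝ => p.1 + p.2) from measurable_fst.add measurable_snd).aemeasurable hsm]
  have key : ∀ p : ℝ × ℝ, Real.exp (-(l * (p.1 + p.2)))
      = Real.exp (-(l * p.1)) * Real.exp (-(l * p.2)) := by
    intro p; rw [← Real.exp_add]; ring_nf
  simp_rw [key]
  exact integral_prod_mul (L := ℝ) (fun a => Real.exp (-(l * a))) (fun b => Real.exp (-(l * b)))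

private lemma my_lintegral_fst {μ ν : Measure ℝ} [SigmaFinite μ] [IsProbabilityMeasure ν]
    {h : ℝ → ℝ≥0∞} (hh : Measurable h) :
    ∫⁻ p, h p.1 ∂(μ.prod ν) = ∫⁻ z, h z ∂μ := by
  rw [← lintegral_map hh measurable_fst, Measure.map_fst_prod, measure_univ, one_smul]

private lemma my_lintegral_snd {μ ν : Measure ℝ} [IsProbabilityMeasure μ] [SigmaFinite ν]
    {h : ℝ → ℝ≥0∞} (hh : Measurable h) :
    ∫⁻ p, h p.2 ∂(μ.prod ν) = ∫⁻ z, h z ∂ν := by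
  rw [← lintegral_map hh measurable_snd, Measure.map_snd_prod, measure_univ, one_smul]

private lemma my_prod_ae_nonneg {μ ν : Measure ℝ} [IsProbabilityMeasure μ] [IsProbabilityMeasure ν]
    (hμ0 : μ (Set.Iio 0) = 0) (hν0 : ν (Set.Iio 0) = 0) :
    ∀ᵐ p : ℝ × ℝ ∂(μ.prod ν), 0 ≤ p.1 ∧ 0 ≤ p.2 := by
  have h1 : ∀ᵐ p : ℝ × ℝ ∂(μ.prod ν), 0 ≤ p.1 := by
    rw [ae_iff]
    simp only [not_le]
    have : {p : ℝ × ℝ | p.1 < 0} = Set.Iio 0 ×ˢ Set.univ := by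
      ext p; simp
    rw [this, Measure.prod_prod, hμ0, zero_mul]
  have h2 : ∀ᵐ p : ℝ × ℝ ∂(μ.prod ν), 0 ≤ p.2 := by
    rw [ae_iff]
    simp only [not_le]
    have : {p : ℝ × ℝ | p.2 < 0} = Set.univ ×ˢ Set.Iio 0 := by
      ext p; simp
    rw [this, Measure.prod_prod, hν0, mul_zero]
  filter_upwards [h1, h2] with p using And.intro

private lemma my_conv_null {μ ν : Measure ℝ} [IsProbabilityMeasure μ] [IsProbabilityMeasure ν]
    (hμ0 : μ (Set.Iio 0) = 0) (hν0 : ν (Set.Iio 0) = 0) :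
    ((μ.prod ν).map (fun p => p.1 + p.2)) (Set.Iio 0) = 0 := by
  rw [Measure.map_apply (show Measurable (fun p : ℝ × ℝ => p.1 + p.2) from measurable_fst.add measurable_snd) measurableSet_Iio]
  refine le_antisymm ?_ zero_le
  have hsub : (fun p : ℝ × ℝ => p.1 + p.2) ⁻¹' Set.Iio 0
      ⊆ (Set.Iio 0 ×ˢ Set.univ) ∪ (Set.univ ×ˢ Set.Iio 0) := by
    intro p hp
    simp only [Set.mem_preimage, Set.mem_Iio] at hp
    rcases lt_or_ge p.1 0 with h | h
    · exact Or.inl ⟨h, trivial⟩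
    · exact Or.inr ⟨trivial, Set.mem_Iio.2 (by linarith)⟩
  calc (μ.prod ν) _ ≤ (μ.prod ν) ((Set.Iio 0 ×ˢ Set.univ) ∪ (Set.univ ×ˢ Set.Iio 0)) :=
        measure_mono hsub
    _ ≤ (μ.prod ν) (Set.Iio 0 ×ˢ Set.univ) + (μ.prod ν) (Set.univ ×ˢ Set.Iio 0) :=
        measure_union_le _ _
    _ = 0 := by rw [Measure.prod_prod, Measure.prod_prod, hμ0, hν0]; simp

/-- A positive continuous function on `[0,∞)` satisfying Condition A:
there exist `c ≥ 0` and `K > 0` such that `f` is convex on `[c,∞)`,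
`f (x*y) ≤ K * f x * f y` for `x, y ∈ [c,∞)`, and `f` is bounded on `[0,c)`. -/
def ConditionA (f : ℝ → ℝ) : Prop :=
  ContinuousOn f (Set.Ici 0) ∧ (∀ x, 0 ≤ x → 0 < f x) ∧
  ∃ c, 0 ≤ c ∧ ∃ K, 0 < K ∧
    ConvexOn ℝ (Set.Ici c) f ∧
    (∀ x y, c ≤ x → c ≤ y → f (x * y) ≤ K * f x * f y) ∧
    ∃ M, ∀ x, 0 ≤ x → x < c → f x ≤ M

/-- Condition B with constant `K`: `f` is convex and nondecreasing on `[0,∞)`,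
submultiplicative up to the constant `K`, and `f > 1` on `[0,∞)`. -/
def ConditionB (f : ℝ → ℝ) (K : ℝ) : Prop :=
  0 < K ∧ ConvexOn ℝ (Set.Ici 0) f ∧ MonotoneOn f (Set.Ici 0) ∧
  (∀ x y, 0 ≤ x → 0 ≤ y → f (x * y) ≤ K * f x * f y) ∧
  (∀ x, 0 ≤ x → 1 < f x)

/-- `φ` is a branching mechanism with parameters `β ∈ ℝ`, `σ ≥ 0` and Lévy
measure `m` (a σ-finite measure carried by `(0,∞)` with `∫ 1 ∧ z² m(dz) < ∞`):
`φ(λ) = βλ + σ²λ²/2 + ∫ (e^{-zλ} - 1 + zλ 1_{z ≤ 1}) m(dz)`. -/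
structure IsBranchingMechanism (φ : ℝ → ℝ) (β σ : ℝ) (m : Measure ℝ) : Prop where
  sigma_nonneg : 0 ≤ σ
  sigmaFinite : SigmaFinite m
  carrier : m (Set.Iic 0) = 0
  levy_finite : ∫⁻ z, ENNReal.ofReal (min 1 (z ^ 2)) ∂m < ⊤
  form : ∀ l, 0 ≤ l →
    φ l = β * l + σ ^ 2 * l ^ 2 / 2
      + ∫ z, (Real.exp (-(z * l)) - 1 + (if z ≤ 1 then z * l else 0)) ∂m

/-- Grey's condition: `∫_{0+} φ(λ)⁻¹ dλ = ∞`, i.e. `φ⁻¹` fails to be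
integrable on every right neighbourhood of `0`. -/
def GreyCondition (φ : ℝ → ℝ) : Prop :=
  ∀ ε, 0 < ε → ¬ IntegrableOn (fun l => (φ l)⁻¹) (Set.Ioo 0 ε) volume

/-- `v t l` is the nonnegative solution of `v_t(λ) = λ - ∫_0^t φ(v_s(λ)) ds`. -/
def IsCumulant (φ : ℝ → ℝ) (v : ℝ → ℝ → ℝ) : Prop :=
  ∀ l, 0 ≤ l → ∀ t, 0 ≤ t →
    0 ≤ v t l ∧ v t l = l - ∫ s in (0:ℝ)..t, φ (v s l)

/-- `(Q t)_{t ≥ 0}` is the transition semigroup of the CB-process with cumulant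
`v`: each `Q t x` is a probability measure on `[0,∞)` with Laplace transform
`∫ e^{-λ y} Q_t(x, dy) = e^{-x v_t(λ)}`. -/
def IsCBSemigroup (v : ℝ → ℝ → ℝ) (Q : ℝ → ℝ → Measure ℝ) : Prop :=
  ∀ t x, 0 ≤ t → 0 ≤ x →
    IsProbabilityMeasure (Q t x) ∧ Q t x (Set.Iio 0) = 0 ∧
    ∀ l, 0 ≤ l → ∫ y, Real.exp (-(l * y)) ∂(Q t x) = Real.exp (-(x * v t l))

/-- `ψ` is an immigration mechanism with drift `h ≥ 0` and immigration measure
`ν` (a σ-finite measure carried by `(0,∞)` with `∫ 1 ∧ z ν(dz) < ∞`):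
`ψ(λ) = hλ + ∫ (1 - e^{-λz}) ν(dz)`. -/
structure IsImmigrationMechanism (ψ : ℝ → ℝ) (h : ℝ) (ν : Measure ℝ) : Prop where
  h_nonneg : 0 ≤ h
  sigmaFinite : SigmaFinite ν
  carrier : ν (Set.Iic 0) = 0
  levy_finite : ∫⁻ z, ENNReal.ofReal (min 1 z) ∂ν < ⊤
  form : ∀ l, 0 ≤ l → ψ l = h * l + ∫ z, (1 - Real.exp (-(l * z))) ∂ν

/-- `(Q^γ t)_{t ≥ 0}` is the transition semigroup of the CBI-process with
cumulant `v` and immigration mechanism `ψ`: each `Qγ t x` is a probability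
measure on `[0,∞)` with Laplace transform
`∫ e^{-λ y} Q^γ_t(x, dy) = exp(-x v_t(λ) - ∫_0^t ψ(v_s(λ)) ds)`. -/
def IsCBISemigroup (v : ℝ → ℝ → ℝ) (ψ : ℝ → ℝ) (Qγ : ℝ → ℝ → Measure ℝ) : Prop :=
  ∀ t x, 0 ≤ t → 0 ≤ x →
    IsProbabilityMeasure (Qγ t x) ∧ Qγ t x (Set.Iio 0) = 0 ∧
    ∀ l, 0 ≤ l →
      ∫ y, Real.exp (-(l * y)) ∂(Qγ t x)
        = Real.exp (-(x * v t l) - ∫ s in (0:ℝ)..t, ψ (v s l))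

/-- Corollary 3.4: for `f` satisfying Condition B and `y ≥ x > 0`,
`∫ f dQ_t(y,·) ≤ K f(1 + y/x) ∫ f dQ_t(x,·)`, and consequently the two
`f`-moments are simultaneously finite. -/
theorem cb_f_moment_comparison
    (f : ℝ → ℝ) (K : ℝ) (hf : ConditionB f K)
    (φ : ℝ → ℝ) (β σ : ℝ) (m : Measure ℝ)
    (hφ : IsBranchingMechanism φ β σ m) (hGrey : GreyCondition φ)
    (v : ℝ → ℝ → ℝ) (hv : IsCumulant φ v)
    (Q : ℝ → ℝ → Measure ℝ) (hQ : IsCBSemigroup v Q)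
    (t : ℝ) (ht : 0 ≤ t) (x y : ℝ) (hx : 0 < x) (hxy : x ≤ y) :
    (∫⁻ z, ENNReal.ofReal (f z) ∂(Q t y))
        ≤ ENNReal.ofReal (K * f (1 + y / x)) * ∫⁻ z, ENNReal.ofReal (f z) ∂(Q t x)
      ∧ ((∫⁻ z, ENNReal.ofReal (f z) ∂(Q t y)) < ⊤ ↔
          (∫⁻ z, ENNReal.ofReal (f z) ∂(Q t x)) < ⊤) := by
  obtain ⟨hK, hconv, hmono, hsub, hgt1⟩ := hf
  have hy : (0:ℝ) < y := lt_of_lt_of_le hx hxy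
  have probQ : ∀ a : ℝ, 0 ≤ a → IsProbabilityMeasure (Q t a) := fun a ha => (hQ t a ht ha).1
  have nullQ : ∀ a : ℝ, 0 ≤ a → (Q t a) (Set.Iio 0) = 0 := fun a ha => (hQ t a ht ha).2.1
  have lapQ : ∀ a : ℝ, 0 ≤ a → ∀ l, 0 ≤ l →
      ∫ z, Real.exp (-(l * z)) ∂(Q t a) = Real.exp (-(a * v t l)) :=
    fun a ha => (hQ t a ht ha).2.2
  have aeQ : ∀ a : ℝ, 0 ≤ a → ∀ᵐ z ∂(Q t a), 0 ≤ z := by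
    intro a ha; rw [ae_iff]; simp only [not_le]; exact nullQ a ha
  have convQ : ∀ a b : ℝ, 0 ≤ a → 0 ≤ b →
      ((Q t a).prod (Q t b)).map (fun p => p.1 + p.2) = Q t (a + b) := by
    intro a b ha hb
    haveI := probQ a ha; haveI := probQ b hb; haveI := probQ (a+b) (by linarith)
    haveI : IsProbabilityMeasure (((Q t a).prod (Q t b)).map (fun p : ℝ × ℝ => p.1 + p.2)) :=
      Measure.isProbabilityMeasure_map (measurable_fst.add measurable_snd).aemeasurable
    refine my_laplace_ext (my_conv_null (nullQ a ha) (nullQ b hb)) (nullQ (a+b) (by linarith)) ?_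
    intro l hl
    rw [my_conv_laplace l, lapQ a ha l hl, lapQ b hb l hl, lapQ (a+b) (by linarith) l hl,
      ← Real.exp_add]
    ring_nf
  set g : ℝ → ℝ := fun z => f (max z 0) with hg_def
  have hg_mono : Monotone g := fun z1 z2 h12 =>
    hmono (Set.mem_Ici.2 (le_max_right _ _)) (Set.mem_Ici.2 (le_max_right _ _)) (max_le_max h12 le_rfl)
  have hg_meas : Measurable g := hg_mono.measurable
  have hg_nonneg : ∀ z, 0 ≤ g z := fun z => (zero_lt_one.trans (hgt1 _ (le_max_right _ _))).le
  have hmeas : ∀ c : ℝ, Measurable fun z => ENNReal.ofReal (g (c * z)) :=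
    fun c => (hg_meas.comp (measurable_const_mul c)).ennreal_ofReal
  set Lg : ℝ → ℝ → ℝ≥0∞ := fun c a => ∫⁻ z, ENNReal.ofReal (g (c * z)) ∂(Q t a) with hLg
  have hfg : ∀ a : ℝ, 0 ≤ a → (∫⁻ z, ENNReal.ofReal (f z) ∂(Q t a)) = Lg 1 a := by
    intro a ha
    refine lintegral_congr_ae ?_
    filter_upwards [aeQ a ha] with z hz
    simp only [hLg, one_mul, hg_def, max_eq_left hz]
  have mono1 : Monotone fun z => ENNReal.ofReal (g (1 * z)) := by
    intro a b hab
    exact ENNReal.ofReal_le_ofReal (hg_mono (by linarith))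
  have M : ∀ (h : ℝ → ℝ≥0∞), Measurable h → Monotone h → ∀ a b : ℝ, 0 ≤ a → a ≤ b →
      ∫⁻ z, h z ∂(Q t a) ≤ ∫⁻ z, h z ∂(Q t b) := by
    intro h hhm hhmono a b ha hab
    haveI := probQ a ha; haveI := probQ (b - a) (by linarith)
    have hb : Q t b = ((Q t a).prod (Q t (b-a))).map (fun p => p.1 + p.2) := by
      rw [convQ a (b-a) ha (by linarith)]; ring_nf
    rw [hb, lintegral_map hhm (show Measurable (fun p : ℝ × ℝ => p.1 + p.2) from measurable_fst.add measurable_snd),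
      ← my_lintegral_fst (μ := Q t a) (ν := Q t (b-a)) hhm]
    refine lintegral_mono_ae ?_
    filter_upwards [my_prod_ae_nonneg (nullQ a ha) (nullQ (b-a) (by linarith))] with p hp
    exact hhmono (le_add_of_nonneg_right hp.2)
  have J : ∀ n : ℕ, ∀ c : ℝ, 0 < c →
      Lg c (((n+1 : ℕ) : ℝ) * x) ≤ Lg (c * ((n+1 : ℕ) : ℝ)) x := by
    intro n
    induction n with
    | zero => intro c hc; simp
    | succ k ih =>
      intro c hc
      haveI := probQ x hx.le
      set N : ℝ := ((k+1+1 : ℕ) : ℝ) with hN_def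
      set mr : ℝ := ((k+1 : ℕ) : ℝ) with hm_def
      have hm0 : (0:ℝ) < mr := by rw [hm_def]; positivity
      have hN0 : (0:ℝ) < N := by rw [hN_def]; positivity
      have hNm : N = mr + 1 := by rw [hN_def, hm_def]; push_cast; ring
      haveI := probQ (mr * x) (by positivity)
      have hQN : Q t (N * x) = ((Q t x).prod (Q t (mr * x))).map (fun p => p.1 + p.2) := by
        rw [convQ x (mr * x) hx.le (by positivity)]
        congr 1
        rw [hNm]; ring
      have step1 : Lg c (N * x)
          = ∫⁻ p, ENNReal.ofReal (g (c * (p.1 + p.2))) ∂((Q t x).prod (Q t (mr * x))) := by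
        simp only [hLg]
        rw [hQN, lintegral_map (hmeas c) (show Measurable (fun p : ℝ × ℝ => p.1 + p.2) from measurable_fst.add measurable_snd)]
      have step2 : ∫⁻ p, ENNReal.ofReal (g (c * (p.1 + p.2))) ∂((Q t x).prod (Q t (mr * x)))
          ≤ ∫⁻ p, (ENNReal.ofReal (1/N) * ENNReal.ofReal (g (N * c * p.1))
              + ENNReal.ofReal (mr/N) * ENNReal.ofReal (g (N * c / mr * p.2)))
            ∂((Q t x).prod (Q t (mr * x))) := by
        refine lintegral_mono_ae ?_
        filter_upwards [my_prod_ae_nonneg (nullQ x hx.le) (nullQ (mr * x) (by positivity))]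
          with p hp
        have e1 : g (c * (p.1 + p.2)) = f (c * (p.1 + p.2)) := by
          simp only [hg_def]
          rw [max_eq_left (mul_nonneg hc.le (add_nonneg hp.1 hp.2))]
        have e2 : g (N * c * p.1) = f (N * c * p.1) := by
          simp only [hg_def]
          rw [max_eq_left (mul_nonneg (mul_nonneg hN0.le hc.le) hp.1)]
        have e3 : g (N * c / mr * p.2) = f (N * c / mr * p.2) := by
          simp only [hg_def]
          rw [max_eq_left (mul_nonneg (div_nonneg (mul_nonneg hN0.le hc.le) hm0.le) hp.2)]
        have hmem1 : N * c * p.1 ∈ Set.Ici (0:ℝ) :=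
          Set.mem_Ici.2 (mul_nonneg (mul_nonneg hN0.le hc.le) hp.1)
        have hmem2 : N * c / mr * p.2 ∈ Set.Ici (0:ℝ) :=
          Set.mem_Ici.2 (mul_nonneg (div_nonneg (mul_nonneg hN0.le hc.le) hm0.le) hp.2)
        have hw1 : (0:ℝ) ≤ 1/N := one_div_nonneg.2 hN0.le
        have hw2 : (0:ℝ) ≤ mr/N := div_nonneg hm0.le hN0.le
        have hws : 1/N + mr/N = 1 := by
          have h1N : (1:ℝ) + mr = N := by rw [hNm]; ring
          rw [← add_div, h1N, div_self (ne_of_gt hN0)]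
        have key := hconv.2 hmem1 hmem2 hw1 hw2 hws
        have harg : (1/N) • (N * c * p.1) + (mr/N) • (N * c / mr * p.2)
            = c * (p.1 + p.2) := by
          simp only [smul_eq_mul]
          field_simp
        rw [harg] at key
        rw [e1]
        calc ENNReal.ofReal (f (c * (p.1 + p.2)))
            ≤ ENNReal.ofReal (1/N * f (N * c * p.1) + mr/N * f (N * c / mr * p.2)) :=
              ENNReal.ofReal_le_ofReal key
          _ = ENNReal.ofReal (1/N) * ENNReal.ofReal (g (N * c * p.1))
              + ENNReal.ofReal (mr/N) * ENNReal.ofReal (g (N * c / mr * p.2)) := by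
              rw [e2, e3, ENNReal.ofReal_add (mul_nonneg hw1 (e2 ▸ hg_nonneg _))
                  (mul_nonneg hw2 (e3 ▸ hg_nonneg _)),
                ENNReal.ofReal_mul hw1, ENNReal.ofReal_mul hw2]
      have step3 : ∫⁻ p, (ENNReal.ofReal (1/N) * ENNReal.ofReal (g (N * c * p.1))
              + ENNReal.ofReal (mr/N) * ENNReal.ofReal (g (N * c / mr * p.2)))
            ∂((Q t x).prod (Q t (mr * x)))
          = ENNReal.ofReal (1/N) * Lg (N * c) x
            + ENNReal.ofReal (mr/N) * Lg (N * c / mr) (mr * x) := by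
        have hA : Measurable fun p : ℝ × ℝ => ENNReal.ofReal (g (N * c * p.1)) :=
          (hmeas (N * c)).comp measurable_fst
        have hB : Measurable fun p : ℝ × ℝ => ENNReal.ofReal (g (N * c / mr * p.2)) :=
          (hmeas (N * c / mr)).comp measurable_snd
        rw [lintegral_add_left (hA.const_mul _),
          lintegral_const_mul _ hA, lintegral_const_mul _ hB,
          my_lintegral_fst (hmeas (N * c)), my_lintegral_snd (hmeas (N * c / mr))]
      have step4 : ENNReal.ofReal (1/N) * Lg (N * c) x
            + ENNReal.ofReal (mr/N) * Lg (N * c / mr) (mr * x)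
          ≤ ENNReal.ofReal (1/N) * Lg (N * c) x
            + ENNReal.ofReal (mr/N) * Lg (N * c / mr * mr) x := by
        have hpos : 0 < N * c / mr := div_pos (mul_pos hN0 hc) hm0
        exact add_le_add_right (mul_le_mul_right (ih (N * c / mr) hpos) _) _
      have step5 : ENNReal.ofReal (1/N) * Lg (N * c) x
            + ENNReal.ofReal (mr/N) * Lg (N * c / mr * mr) x = Lg (c * N) x := by
        rw [div_mul_cancel₀ _ (ne_of_gt hm0), mul_comm c N,
          ← add_mul, ← ENNReal.ofReal_add (one_div_nonneg.2 hN0.le) (div_nonneg hm0.le hN0.le)]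
        have hws : 1/N + mr/N = 1 := by
          have h1N : (1:ℝ) + mr = N := by rw [hNm]; ring
          rw [← add_div, h1N, div_self (ne_of_gt hN0)]
        rw [hws, ENNReal.ofReal_one, one_mul]
      calc Lg c (N * x) = _ := step1
        _ ≤ _ := step2
        _ = _ := step3
        _ ≤ _ := step4
        _ = Lg (c * N) x := step5
  -- choose n
  have hyx1 : (0:ℝ) < y / x := by positivity
  have hn1 : 1 ≤ ⌈y / x⌉₊ := Nat.one_le_ceil_iff.2 hyx1
  obtain ⟨k, hk⟩ : ∃ k, ⌈y / x⌉₊ = k + 1 := ⟨⌈y / x⌉₊ - 1, (Nat.succ_pred_eq_of_pos hn1).symm⟩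
  have hny : y ≤ ((k+1 : ℕ) : ℝ) * x := by
    have h1 := Nat.le_ceil (y / x)
    rw [hk] at h1
    calc y = y / x * x := by field_simp
      _ ≤ ((k+1 : ℕ) : ℝ) * x := by
          exact mul_le_mul_of_nonneg_right h1 hx.le
  have hnle : ((k+1 : ℕ) : ℝ) ≤ 1 + y / x := by
    have h1 := Nat.ceil_lt_add_one (le_of_lt hyx1)
    rw [hk] at h1
    linarith
  have h1yx : (0:ℝ) ≤ 1 + y / x := by positivity
  have hKf : (0:ℝ) ≤ K * f (1 + y / x) :=
    mul_nonneg hK.le (zero_lt_one.trans (hgt1 _ h1yx)).le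
  have main : (∫⁻ z, ENNReal.ofReal (f z) ∂(Q t y))
      ≤ ENNReal.ofReal (K * f (1 + y / x)) * ∫⁻ z, ENNReal.ofReal (f z) ∂(Q t x) := by
    rw [hfg y hy.le, hfg x hx.le]
    calc Lg 1 y ≤ Lg 1 (((k+1 : ℕ) : ℝ) * x) := by
          exact M _ (hmeas 1) mono1 y (((k+1 : ℕ) : ℝ) * x) hy.le hny
      _ ≤ Lg (1 * ((k+1 : ℕ) : ℝ)) x := J k 1 one_pos
      _ ≤ ENNReal.ofReal (K * f (1 + y / x)) * Lg 1 x := by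
          rw [one_mul]
          simp only [hLg]
          have step : ∀ᵐ z ∂(Q t x), ENNReal.ofReal (g (((k+1 : ℕ) : ℝ) * z))
              ≤ ENNReal.ofReal (K * f (1 + y / x)) * ENNReal.ofReal (g (1 * z)) := by
            filter_upwards [aeQ x hx.le] with z hz
            rw [one_mul]
            have e1 : g (((k+1 : ℕ) : ℝ) * z) = f (((k+1 : ℕ) : ℝ) * z) := by
              simp only [hg_def]; rw [max_eq_left (mul_nonneg (by positivity) hz)]
            have e2 : g z = f z := by
              simp only [hg_def]; rw [max_eq_left hz]
            rw [e1, e2, ← ENNReal.ofReal_mul hKf]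
            refine ENNReal.ofReal_le_ofReal ?_
            have h1 : f (((k+1 : ℕ) : ℝ) * z) ≤ K * f ((k+1 : ℕ) : ℝ) * f z :=
              hsub _ _ (by positivity) hz
            have h2 : f ((k+1 : ℕ) : ℝ) ≤ f (1 + y / x) :=
              hmono (Set.mem_Ici.2 (by positivity)) (Set.mem_Ici.2 h1yx) hnle
            have hfz : (0:ℝ) ≤ f z := (zero_lt_one.trans (hgt1 z hz)).le
            calc f (((k+1 : ℕ) : ℝ) * z) ≤ K * f ((k+1 : ℕ) : ℝ) * f z := h1
              _ ≤ K * f (1 + y / x) * f z :=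
                mul_le_mul_of_nonneg_right (mul_le_mul_of_nonneg_left h2 hK.le) hfz
          calc ∫⁻ z, ENNReal.ofReal (g (((k+1 : ℕ) : ℝ) * z)) ∂(Q t x)
              ≤ ∫⁻ z, ENNReal.ofReal (K * f (1 + y / x)) * ENNReal.ofReal (g (1 * z)) ∂(Q t x) :=
                lintegral_mono_ae step
            _ = ENNReal.ofReal (K * f (1 + y / x))
                * ∫⁻ z, ENNReal.ofReal (g (1 * z)) ∂(Q t x) :=
                lintegral_const_mul _ (hmeas 1)
  refine ⟨main, ?_, ?_⟩
  · intro hfin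
    have hle : (∫⁻ z, ENNReal.ofReal (f z) ∂(Q t x)) ≤ ∫⁻ z, ENNReal.ofReal (f z) ∂(Q t y) := by
      rw [hfg x hx.le, hfg y hy.le]
      exact M _ (hmeas 1) mono1 x y hx.le hxy
    exact lt_of_le_of_lt hle hfin
  · intro hfin
    refine lt_of_le_of_lt main ?_
    exact ENNReal.mul_lt_top ENNReal.ofReal_lt_top hfin
end
end

section
/- Let f satisfy Condition B with constant K, let φ be a branching mechanism satisfying Grey's condition, and let (Q_t)_{t≥0} be the transition semigroup of the CB-process with branching mechanism φ. Then for every probability measure μ on [0,∞) (the law of the initial state X_0) and every t ≥ 0, one has (as an inequality in [0,∞]): ∫_{[0,∞)} ∫_{[0,∞)} f(y) Q_t(x,dy) μ(dx) ≤ (1/2) K² f(2) [f(1) + ∫_{[0,∞)} f(x) μ(dx)] · ∫_{[0,∞)} f(z) Q_t(1,dz). -/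
open MeasureTheory Set Filter

noncomputable section

theorem laplace_ext (ν₁ ν₂ : Measure ℝ) [IsProbabilityMeasure ν₁] [IsProbabilityMeasure ν₂]
    (h1 : ν₁ (Set.Iio 0) = 0) (h2 : ν₂ (Set.Iio 0) = 0)
    (h : ∀ l : ℝ, 0 ≤ l →
      ∫ y, Real.exp (-(l * y)) ∂ν₁ = ∫ y, Real.exp (-(l * y)) ∂ν₂) :
    ν₁ = ν₂ := by
  set X := Set.Icc (0:ℝ) 1 with hX
  have hmemT : ∀ y : ℝ, Real.exp (-(max y 0)) ∈ X := by
    intro y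
    constructor
    · exact (Real.exp_pos _).le
    · exact Real.exp_le_one_iff.mpr (by simp [le_max_right])
  set T : ℝ → X := fun y => ⟨Real.exp (-(max y 0)), hmemT y⟩ with hT
  have hTc : Continuous T := by
    apply Continuous.subtype_mk
    exact Real.continuous_exp.comp ((continuous_id.max continuous_const).neg)
  set ρ₁ : Measure X := ν₁.map T with hρ₁
  set ρ₂ : Measure X := ν₂.map T with hρ₂
  haveI : IsProbabilityMeasure ρ₁ := Measure.isProbabilityMeasure_map hTc.measurable.aemeasurable
  haveI : IsProbabilityMeasure ρ₂ := Measure.isProbabilityMeasure_map hTc.measurable.aemeasurable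
  -- integrability of continuous functions on X
  have hint : ∀ (ρ : Measure X) [IsProbabilityMeasure ρ] (g : C(X, ℝ)),
      Integrable (fun u => g u) ρ := by
    intro ρ hρ g
    exact (BoundedContinuousFunction.mkOfCompact g).integrable ρ
  -- moments agree
  have hae1 : ∀ᵐ y ∂ν₁, 0 ≤ y := by
    filter_upwards [measure_eq_zero_iff_ae_notMem.mp h1] with y hy
    simpa using hy
  have hae2 : ∀ᵐ y ∂ν₂, 0 ≤ y := by
    filter_upwards [measure_eq_zero_iff_ae_notMem.mp h2] with y hy
    simpa using hy
  have hmom : ∀ n : ℕ, ∫ u : X, (u : ℝ) ^ n ∂ρ₁ = ∫ u : X, (u : ℝ) ^ n ∂ρ₂ := by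
    intro n
    have hmeas : AEStronglyMeasurable (fun u : X => (u : ℝ) ^ n) ρ₁ := by
      exact (continuous_subtype_val.pow n).aestronglyMeasurable
    have key : ∀ (ν : Measure ℝ), (∀ᵐ y ∂ν, 0 ≤ y) →
        ∫ u : X, (u : ℝ) ^ n ∂(ν.map T) = ∫ y, Real.exp (-((n:ℝ) * y)) ∂ν := by
      intro ν hae
      rw [integral_map (f := fun u : X => (u : ℝ) ^ n) hTc.measurable.aemeasurable
        (continuous_subtype_val.pow n).aestronglyMeasurable]
      apply integral_congr_ae
      filter_upwards [hae] with y hy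
      show (Real.exp (-(max y 0))) ^ n = _
      rw [max_eq_left hy, ← Real.exp_nat_mul]
      ring_nf
    rw [key ν₁ hae1, key ν₂ hae2, h (n:ℝ) (Nat.cast_nonneg n)]
  -- all continuous functions agree
  have hcont : ∀ (ρ : Measure X) [IsProbabilityMeasure ρ],
      Continuous (fun g : C(X, ℝ) => ∫ u, g u ∂ρ) := by
    intro ρ hρ
    apply (lipschitzWith_iff_dist_le_mul (K := 1)).mpr ?_ |>.continuous
    intro g₁ g₂
    rw [dist_eq_norm, ← integral_sub (hint ρ g₁) (hint ρ g₂)]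
    calc ‖∫ u, (g₁ u - g₂ u) ∂ρ‖ ≤ ‖g₁ - g₂‖ * (ρ Set.univ).toReal := by
          apply norm_integral_le_of_norm_le_const
          filter_upwards with u
          calc ‖g₁ u - g₂ u‖ = ‖(g₁ - g₂) u‖ := by simp
            _ ≤ ‖g₁ - g₂‖ := ContinuousMap.norm_coe_le_norm _ u
      _ = ↑(1:NNReal) * dist g₁ g₂ := by rw [dist_eq_norm]; simp
  have hall : ∀ g : C(X, ℝ), ∫ u, g u ∂ρ₁ = ∫ u, g u ∂ρ₂ := by
    intro g
    have hS : IsClosed {g : C(X, ℝ) | ∫ u, g u ∂ρ₁ = ∫ u, g u ∂ρ₂} :=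
      isClosed_eq (hcont ρ₁) (hcont ρ₂)
    have hpoly : (polynomialFunctions X : Set C(X, ℝ)) ⊆
        {g : C(X, ℝ) | ∫ u, g u ∂ρ₁ = ∫ u, g u ∂ρ₂} := by
      intro g hg
      rw [polynomialFunctions_coe] at hg
      obtain ⟨p, -, rfl⟩ := hg
      show ∫ u : X, Polynomial.eval (u:ℝ) p ∂ρ₁ = ∫ u : X, Polynomial.eval (u:ℝ) p ∂ρ₂
      have hev : ∀ u : X, Polynomial.eval (u:ℝ) p
          = ∑ i ∈ Finset.range (p.natDegree + 1), p.coeff i * (u:ℝ) ^ i := by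
        intro u; rw [Polynomial.eval_eq_sum_range]
      simp_rw [hev]
      rw [integral_finset_sum, integral_finset_sum]
      · apply Finset.sum_congr rfl
        intro i _
        rw [integral_const_mul, integral_const_mul, hmom i]
      · intro i _
        exact hint ρ₂ ⟨fun u => p.coeff i * (u:ℝ) ^ i,
          continuous_const.mul (continuous_subtype_val.pow i)⟩
      · intro i _
        exact hint ρ₁ ⟨fun u => p.coeff i * (u:ℝ) ^ i,
          continuous_const.mul (continuous_subtype_val.pow i)⟩
    have hdense := polynomialFunctions_closure_eq_top (0:ℝ) 1
    have hg2 : g ∈ (polynomialFunctions X).topologicalClosure := by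
      rw [hdense]; trivial
    have hg3 : g ∈ closure (polynomialFunctions X : Set C(X, ℝ)) := by
      rwa [← SetLike.mem_coe, Subalgebra.topologicalClosure_coe] at hg2
    exact hS.closure_subset_iff.mpr hpoly hg3
  have hρ : ρ₁ = ρ₂ := by
    apply ext_of_forall_lintegral_eq_of_IsFiniteMeasure
    intro f
    have hfc : Continuous (fun u : X => (f u : ℝ)) :=
      NNReal.continuous_coe.comp f.continuous
    have key : ∀ (ρ : Measure X) [IsProbabilityMeasure ρ],
        ∫⁻ u, (f u : ENNReal) ∂ρ = ENNReal.ofReal (∫ u, (f u : ℝ) ∂ρ) := by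
      intro ρ hρ
      rw [← lintegral_coe_eq_integral]
      exact hint ρ ⟨fun u => (f u : ℝ), hfc⟩
    rw [key ρ₁, key ρ₂]
    exact congrArg ENNReal.ofReal (hall ⟨fun u => (f u : ℝ), hfc⟩)
  -- pull back
  have hSm : Measurable (fun u : X => -Real.log (u : ℝ)) :=
    (Real.measurable_log.comp measurable_subtype_coe).neg
  have hback : ∀ (ν : Measure ℝ), (∀ᵐ y ∂ν, 0 ≤ y) →
      (ν.map T).map (fun u : X => -Real.log (u : ℝ)) = ν := by
    intro ν hae
    rw [Measure.map_map hSm hTc.measurable]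
    have : ((fun u : X => -Real.log (u : ℝ)) ∘ T) = fun y => max y 0 := by
      funext y
      simp [hT, Real.log_exp]
    rw [this]
    have : (fun y : ℝ => max y 0) =ᵐ[ν] id := by
      filter_upwards [hae] with y hy
      simp [max_eq_left hy]
    rw [Measure.map_congr this, Measure.map_id]
  calc ν₁ = (ν₁.map T).map (fun u : X => -Real.log (u : ℝ)) := (hback ν₁ hae1).symm
    _ = (ν₂.map T).map (fun u : X => -Real.log (u : ℝ)) := by rw [← hρ₁, ← hρ₂, hρ]
    _ = ν₂ := hback ν₂ hae2

theorem cb_conv (v : ℝ → ℝ → ℝ) (Q : ℝ → ℝ → Measure ℝ) (hQ : IsCBSemigroup v Q)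
    (t : ℝ) (ht : 0 ≤ t) (x y : ℝ) (hx : 0 ≤ x) (hy : 0 ≤ y) :
    Q t (x + y) = Measure.map (fun p : ℝ × ℝ => p.1 + p.2) ((Q t x).prod (Q t y)) := by
  obtain ⟨hP1, hN1, hL1⟩ := hQ t x ht hx
  obtain ⟨hP2, hN2, hL2⟩ := hQ t y ht hy
  obtain ⟨hP3, hN3, hL3⟩ := hQ t (x + y) ht (by linarith)
  haveI := hP1; haveI := hP2; haveI := hP3
  have hmadd : Measurable (fun p : ℝ × ℝ => p.1 + p.2) := measurable_fst.add measurable_snd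
  set C := Measure.map (fun p : ℝ × ℝ => p.1 + p.2) ((Q t x).prod (Q t y)) with hC
  haveI : IsProbabilityMeasure C := Measure.isProbabilityMeasure_map hmadd.aemeasurable
  have hCN : C (Set.Iio 0) = 0 := by
    rw [hC, Measure.map_apply hmadd measurableSet_Iio]
    have hsub : (fun p : ℝ × ℝ => p.1 + p.2) ⁻¹' (Set.Iio 0) ⊆
        (Set.Iio 0 ×ˢ (Set.univ : Set ℝ)) ∪ ((Set.univ : Set ℝ) ×ˢ Set.Iio 0) := by
      intro p hp
      simp only [Set.mem_preimage, Set.mem_Iio] at hp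
      rcases lt_or_ge p.1 0 with h | h
      · exact Or.inl ⟨h, trivial⟩
      · exact Or.inr ⟨trivial, by simp only [Set.mem_Iio]; linarith⟩
    refine measure_mono_null hsub ?_
    apply measure_union_null <;> rw [Measure.prod_prod] <;> simp [hN1, hN2]
  apply laplace_ext _ _ hN3 hCN
  intro l hl
  rw [hL3 l hl, hC]
  have hsm : AEStronglyMeasurable (fun s : ℝ => Real.exp (-(l * s)))
      (Measure.map (fun p : ℝ × ℝ => p.1 + p.2) ((Q t x).prod (Q t y))) :=
    (Continuous.aestronglyMeasurable (by continuity))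
  rw [integral_map hmadd.aemeasurable hsm]
  have hsplit : ∀ p : ℝ × ℝ,
      Real.exp (-(l * (p.1 + p.2))) = Real.exp (-(l * p.1)) * Real.exp (-(l * p.2)) := by
    intro p; rw [← Real.exp_add]; congr 1; ring
  simp_rw [hsplit]
  rw [integral_prod_mul (f := fun a => Real.exp (-(l * a))) (g := fun b => Real.exp (-(l * b)))]
  rw [hL1 l hl, hL2 l hl, ← Real.exp_add]
  congr 1; ring

theorem lintegral_fst_prob {μ ν : Measure ℝ} [IsProbabilityMeasure μ] [IsProbabilityMeasure ν]
    (G : ℝ → ENNReal) (hG : Measurable G) :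
    ∫⁻ p : ℝ × ℝ, G p.1 ∂(μ.prod ν) = ∫⁻ a, G a ∂μ := by
  rw [lintegral_prod (fun p : ℝ × ℝ => G p.1) ((hG.comp measurable_fst).aemeasurable)]
  simp [lintegral_const, measure_univ]

theorem lintegral_snd_prob {μ ν : Measure ℝ} [IsProbabilityMeasure μ] [IsProbabilityMeasure ν]
    (G : ℝ → ENNReal) (hG : Measurable G) :
    ∫⁻ p : ℝ × ℝ, G p.2 ∂(μ.prod ν) = ∫⁻ b, G b ∂ν := by
  rw [lintegral_prod (fun p : ℝ × ℝ => G p.2) ((hG.comp measurable_snd).aemeasurable)]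
  simp [lintegral_const, measure_univ]

theorem ae_prod_nonneg {μ ν : Measure ℝ} [IsProbabilityMeasure μ] [IsProbabilityMeasure ν]
    (h1 : μ (Set.Iio 0) = 0) (h2 : ν (Set.Iio 0) = 0) :
    ∀ᵐ p : ℝ × ℝ ∂(μ.prod ν), 0 ≤ p.1 ∧ 0 ≤ p.2 := by
  have hμ : ∀ᵐ p : ℝ × ℝ ∂(μ.prod ν), p ∉ (Set.Iio 0 ×ˢ (Set.univ : Set ℝ)) := by
    apply measure_eq_zero_iff_ae_notMem.mp
    rw [Measure.prod_prod]; simp [h1]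
  have hν : ∀ᵐ p : ℝ × ℝ ∂(μ.prod ν), p ∉ ((Set.univ : Set ℝ) ×ˢ Set.Iio 0) := by
    apply measure_eq_zero_iff_ae_notMem.mp
    rw [Measure.prod_prod]; simp [h2]
  filter_upwards [hμ, hν] with p hp1 hp2
  constructor
  · by_contra hc; exact hp1 ⟨by simpa using lt_of_not_ge hc, trivial⟩
  · by_contra hc; exact hp2 ⟨trivial, by simpa using lt_of_not_ge hc⟩

theorem g_monotone {f : ℝ → ℝ} {K : ℝ} (hf : ConditionB f K) :
    Monotone (fun y : ℝ => f (max y 0)) := by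
  intro a b hab
  exact hf.2.2.1 (le_max_right a 0) (le_max_right b 0) (max_le_max hab le_rfl)

theorem cb_scale {f : ℝ → ℝ} {K : ℝ} (hf : ConditionB f K)
    (v : ℝ → ℝ → ℝ) (Q : ℝ → ℝ → Measure ℝ) (hQ : IsCBSemigroup v Q)
    (t : ℝ) (ht : 0 ≤ t) :
    ∀ (n : ℕ) (l : ℝ), 0 ≤ l →
      ∫⁻ y, ENNReal.ofReal (f (max (l * y) 0)) ∂(Q t ((n : ℝ) + 1))
        ≤ ∫⁻ y, ENNReal.ofReal (f (max ((l * ((n : ℝ) + 1)) * y) 0)) ∂(Q t 1) := by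
  have hgm : Monotone (fun y : ℝ => f (max y 0)) := g_monotone hf
  have hgmeas : Measurable (fun y : ℝ => f (max y 0)) := hgm.measurable
  have hFm : ∀ c : ℝ, Measurable (fun y : ℝ => ENNReal.ofReal (f (max (c * y) 0))) := by
    intro c
    exact ENNReal.measurable_ofReal.comp (hgmeas.comp (measurable_const.mul measurable_id))
  have hfpos : ∀ s : ℝ, 0 ≤ s → 0 ≤ f s := fun s hs => le_of_lt (lt_trans one_pos (hf.2.2.2.2 s hs))
  intro n
  induction n with
  | zero =>
    intro l hl
    norm_num
  | succ n ih =>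
    intro l hl
    have hm1 : (0:ℝ) ≤ (n : ℝ) + 1 := by positivity
    have hme : (0:ℝ) < (n : ℝ) + 1 := by positivity
    obtain ⟨hP1, hN1, -⟩ := hQ t ((n:ℝ) + 1) ht hm1
    obtain ⟨hP2, hN2, -⟩ := hQ t 1 ht zero_le_one
    haveI := hP1; haveI := hP2
    have hcast : ((n + 1 : ℕ) : ℝ) + 1 = ((n:ℝ) + 1) + 1 := by push_cast; ring
    rw [hcast, cb_conv v Q hQ t ht ((n:ℝ)+1) 1 hm1 zero_le_one]
    have hmadd : Measurable (fun p : ℝ × ℝ => p.1 + p.2) := measurable_fst.add measurable_snd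
    rw [lintegral_map (hFm l) hmadd]
    -- notation
    set m : ℝ := (n : ℝ) + 1 with hmdef
    set c₁ : ℝ := l * (m + 1) / m with hc₁
    set c₂ : ℝ := l * (m + 1) with hc₂
    have hc₁0 : 0 ≤ c₁ := by positivity
    have hc₂0 : 0 ≤ c₂ := by positivity
    have hA0 : (0:ℝ) ≤ m / (m + 1) := by positivity
    have hB0 : (0:ℝ) ≤ 1 / (m + 1) := by positivity
    set A : ENNReal := ENNReal.ofReal (m / (m + 1)) with hA
    set B : ENNReal := ENNReal.ofReal (1 / (m + 1)) with hB
    have M1 : Measurable (fun p : ℝ × ℝ => ENNReal.ofReal (f (max (c₁ * p.1) 0))) :=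
      (hFm c₁).comp measurable_fst
    have M2 : Measurable (fun p : ℝ × ℝ => ENNReal.ofReal (f (max (c₂ * p.2) 0))) :=
      (hFm c₂).comp measurable_snd
    have hm0 : m ≠ 0 := ne_of_gt hme
    have hm10 : m + 1 ≠ 0 := by positivity
    calc ∫⁻ p : ℝ × ℝ, ENNReal.ofReal (f (max (l * (p.1 + p.2)) 0)) ∂((Q t m).prod (Q t 1))
        ≤ ∫⁻ p : ℝ × ℝ, (A * ENNReal.ofReal (f (max (c₁ * p.1) 0))
            + B * ENNReal.ofReal (f (max (c₂ * p.2) 0))) ∂((Q t m).prod (Q t 1)) := by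
          apply lintegral_mono_ae
          filter_upwards [ae_prod_nonneg hN1 hN2] with p hp
          obtain ⟨hp1, hp2⟩ := hp
          have harg0 : 0 ≤ l * (p.1 + p.2) := by positivity
          have harg1 : 0 ≤ c₁ * p.1 := mul_nonneg hc₁0 hp1
          have harg2 : 0 ≤ c₂ * p.2 := mul_nonneg hc₂0 hp2
          rw [max_eq_left harg0, max_eq_left harg1, max_eq_left harg2]
          have hconv : f (l * (p.1 + p.2))
              ≤ m/(m+1) * f (c₁ * p.1) + 1/(m+1) * f (c₂ * p.2) := by
            have h2 := hf.2.1.2 (Set.mem_Ici.mpr harg1) (Set.mem_Ici.mpr harg2) hA0 hB0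
              (by field_simp)
            have heq : (m/(m+1)) • (c₁ * p.1) + (1/(m+1)) • (c₂ * p.2) = l * (p.1 + p.2) := by
              rw [smul_eq_mul, smul_eq_mul, hc₁, hc₂]
              field_simp
            rw [heq] at h2
            simpa [smul_eq_mul] using h2
          calc ENNReal.ofReal (f (l * (p.1 + p.2)))
              ≤ ENNReal.ofReal (m/(m+1) * f (c₁ * p.1) + 1/(m+1) * f (c₂ * p.2)) :=
                ENNReal.ofReal_le_ofReal hconv
            _ = A * ENNReal.ofReal (f (c₁ * p.1)) + B * ENNReal.ofReal (f (c₂ * p.2)) := by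
                rw [ENNReal.ofReal_add (mul_nonneg hA0 (hfpos _ harg1))
                  (mul_nonneg hB0 (hfpos _ harg2)),
                  ENNReal.ofReal_mul hA0, ENNReal.ofReal_mul hB0]
      _ = A * ∫⁻ a, ENNReal.ofReal (f (max (c₁ * a) 0)) ∂(Q t m)
          + B * ∫⁻ b, ENNReal.ofReal (f (max (c₂ * b) 0)) ∂(Q t 1) := by
          rw [lintegral_add_left (M1.const_mul A), lintegral_const_mul A M1,
            lintegral_const_mul B M2,
            lintegral_fst_prob (fun a => ENNReal.ofReal (f (max (c₁ * a) 0))) (hFm c₁),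
            lintegral_snd_prob (fun b => ENNReal.ofReal (f (max (c₂ * b) 0))) (hFm c₂)]
      _ ≤ A * ∫⁻ y, ENNReal.ofReal (f (max ((c₁ * m) * y) 0)) ∂(Q t 1)
          + B * ∫⁻ b, ENNReal.ofReal (f (max (c₂ * b) 0)) ∂(Q t 1) := by
          exact add_le_add_left (mul_le_mul_right (ih c₁ hc₁0) A) _
      _ = (A + B) * ∫⁻ b, ENNReal.ofReal (f (max (c₂ * b) 0)) ∂(Q t 1) := by
          have harg : c₁ * m = c₂ := by rw [hc₁, hc₂]; field_simp
          rw [harg, add_mul]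
      _ = ∫⁻ b, ENNReal.ofReal (f (max ((l * (m + 1)) * b) 0)) ∂(Q t 1) := by
          have hAB : A + B = 1 := by
            rw [hA, hB, ← ENNReal.ofReal_add hA0 hB0]
            rw [show m/(m+1) + 1/(m+1) = 1 by field_simp]
            exact ENNReal.ofReal_one
          rw [hAB, one_mul, hc₂]

/-- Corollary 3.5: for a CB-process with arbitrary initial law `μ`,
`P f(X_t) ≤ (1/2) K² f(2) [f(1) + P f(X_0)] ⬝ ∫ f dQ_t(1,·)`
as an inequality in `[0,∞]`. -/
theorem cb_f_moment_initial_bound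
    (f : ℝ → ℝ) (K : ℝ) (hf : ConditionB f K)
    (φ : ℝ → ℝ) (β σ : ℝ) (m : Measure ℝ)
    (hφ : IsBranchingMechanism φ β σ m) (hGrey : GreyCondition φ)
    (v : ℝ → ℝ → ℝ) (hv : IsCumulant φ v)
    (Q : ℝ → ℝ → Measure ℝ) (hQ : IsCBSemigroup v Q)
    (μ : Measure ℝ) (hμ : IsProbabilityMeasure μ) (hμ0 : μ (Set.Iio 0) = 0)
    (t : ℝ) (ht : 0 ≤ t) :
    (∫⁻ x, (∫⁻ y, ENNReal.ofReal (f y) ∂(Q t x)) ∂μ)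
      ≤ ENNReal.ofReal (K ^ 2 * f 2 / 2)
          * ((ENNReal.ofReal (f 1) + ∫⁻ x, ENNReal.ofReal (f x) ∂μ)
              * ∫⁻ z, ENNReal.ofReal (f z) ∂(Q t 1)) := by
  
  obtain ⟨hK, hcx, hmono, hsub, hgt1⟩ := hf
  have hgm : Monotone (fun y : ℝ => f (max y 0)) :=
    g_monotone ⟨hK, hcx, hmono, hsub, hgt1⟩
  have hgmeas : Measurable (fun y : ℝ => f (max y 0)) := hgm.measurable
  have hFmeas : Measurable (fun y : ℝ => ENNReal.ofReal (f (max y 0))) :=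
    ENNReal.measurable_ofReal.comp hgmeas
  have hfpos : ∀ s : ℝ, 0 ≤ s → 0 ≤ f s := fun s hs => le_of_lt (lt_trans one_pos (hgt1 s hs))
  have hf1 : 1 < f 1 := hgt1 1 zero_le_one
  have hf2 : 1 < f 2 := hgt1 2 (by norm_num)
  have hKf1 : 1 ≤ K * f 1 := by
    have h11 := hsub 1 1 zero_le_one zero_le_one
    rw [mul_one] at h11
    nlinarith
  obtain ⟨-, hN1, -⟩ := hQ t 1 ht zero_le_one
  haveI hP1 : IsProbabilityMeasure (Q t 1) := (hQ t 1 ht zero_le_one).1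
  -- the F-version of the Q t 1 integral
  have hI : ∫⁻ z, ENNReal.ofReal (f z) ∂(Q t 1)
      = ∫⁻ z, ENNReal.ofReal (f (max z 0)) ∂(Q t 1) := by
    apply lintegral_congr_ae
    filter_upwards [measure_eq_zero_iff_ae_notMem.mp hN1] with z hz
    rw [max_eq_left (by simpa using hz)]
  set I : ENNReal := ∫⁻ z, ENNReal.ofReal (f (max z 0)) ∂(Q t 1) with hIdef
  set c : ℝ := K ^ 2 * f 2 / 2 with hc
  have hc0 : 0 ≤ c := by positivity
  -- pointwise bound
  have hpt : ∀ x : ℝ, 0 ≤ x →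
      ∫⁻ y, ENNReal.ofReal (f y) ∂(Q t x)
        ≤ ENNReal.ofReal c * ((ENNReal.ofReal (f 1) + ENNReal.ofReal (f (max x 0))) * I) := by
    intro x hx
    obtain ⟨hPx, hNx, -⟩ := hQ t x ht hx
    haveI := hPx
    set n : ℕ := ⌈x⌉₊ ⊔ 1 with hn
    have hn1 : 1 ≤ n := le_max_right _ _
    obtain ⟨M, hM⟩ : ∃ M, n = M + 1 := ⟨n - 1, (Nat.succ_pred_eq_of_pos hn1).symm⟩
    have hxn : x ≤ (n : ℝ) := by
      refine le_trans (Nat.le_ceil x) ?_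
      exact_mod_cast Nat.cast_le.mpr (le_max_left _ _)
    have hnx1 : (n : ℝ) ≤ x + 1 := by
      rw [hn]
      push_cast [Nat.cast_max]
      apply max_le
      · exact (Nat.ceil_lt_add_one hx).le
      · linarith
    have hn0 : (0:ℝ) ≤ (n : ℝ) := Nat.cast_nonneg n
    obtain ⟨hPn, hNn, -⟩ := hQ t (n : ℝ) ht hn0
    haveI := hPn
    have hd0 : 0 ≤ (n : ℝ) - x := by linarith
    obtain ⟨hPd, hNd, -⟩ := hQ t ((n:ℝ) - x) ht hd0
    haveI := hPd
    -- step 1 : replace f by g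
    have e1 : ∫⁻ y, ENNReal.ofReal (f y) ∂(Q t x)
        = ∫⁻ y, ENNReal.ofReal (f (max y 0)) ∂(Q t x) := by
      apply lintegral_congr_ae
      filter_upwards [measure_eq_zero_iff_ae_notMem.mp hNx] with z hz
      rw [max_eq_left (by simpa using hz)]
    -- step 2 : monotonicity in the initial state
    have e2 : ∫⁻ y, ENNReal.ofReal (f (max y 0)) ∂(Q t x)
        ≤ ∫⁻ y, ENNReal.ofReal (f (max y 0)) ∂(Q t (n : ℝ)) := by
      have hrw : (n : ℝ) = x + ((n:ℝ) - x) := by ring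
      rw [hrw, cb_conv v Q hQ t ht x ((n:ℝ) - x) hx hd0]
      have hmadd : Measurable (fun p : ℝ × ℝ => p.1 + p.2) := measurable_fst.add measurable_snd
      rw [lintegral_map hFmeas hmadd]
      rw [← lintegral_fst_prob (ν := Q t ((n:ℝ) - x))
        (fun y => ENNReal.ofReal (f (max y 0))) hFmeas]
      apply lintegral_mono_ae
      filter_upwards [ae_prod_nonneg hNx hNd] with p hp
      exact ENNReal.ofReal_le_ofReal (hgm (le_add_of_nonneg_right hp.2))
    -- step 3 : scaling bound
    have e3 : ∫⁻ y, ENNReal.ofReal (f (max y 0)) ∂(Q t (n : ℝ))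
        ≤ ∫⁻ y, ENNReal.ofReal (f (max ((n : ℝ) * y) 0)) ∂(Q t 1) := by
      have hcast : (n : ℝ) = (M : ℝ) + 1 := by rw [hM]; push_cast; ring
      have := cb_scale ⟨hK, hcx, hmono, hsub, hgt1⟩ v Q hQ t ht M 1 zero_le_one
      rw [← hcast] at this
      simpa using this
    -- step 4 : submultiplicativity
    have e4 : ∫⁻ y, ENNReal.ofReal (f (max ((n : ℝ) * y) 0)) ∂(Q t 1)
        ≤ ENNReal.ofReal (K * f (n : ℝ)) * I := by
      rw [hIdef, ← lintegral_const_mul _ hFmeas]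
      apply lintegral_mono_ae
      filter_upwards [measure_eq_zero_iff_ae_notMem.mp hN1] with z hz
      have hz0 : (0:ℝ) ≤ z := by simpa using hz
      rw [max_eq_left (mul_nonneg hn0 hz0), max_eq_left hz0,
        ← ENNReal.ofReal_mul (mul_nonneg hK.le (hfpos _ hn0))]
      apply ENNReal.ofReal_le_ofReal
      exact hsub _ z hn0 hz0
    -- step 5: bound K * f n
    have e5 : K * f (n : ℝ) ≤ c * (f 1 + f x) := by
      have h1 : f (n : ℝ) ≤ f (x + 1) := hmono (Set.mem_Ici.mpr hn0)
        (Set.mem_Ici.mpr (by linarith)) hnx1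
      have h2 : f (x + 1) ≤ (1/2) * f (2 * x) + (1/2) * f 2 := by
        have := hcx.2 (Set.mem_Ici.mpr (by linarith : (0:ℝ) ≤ 2 * x))
          (Set.mem_Ici.mpr (by norm_num : (0:ℝ) ≤ 2))
          (by norm_num : (0:ℝ) ≤ 1/2) (by norm_num : (0:ℝ) ≤ 1/2) (by norm_num)
        have heq : (1/2 : ℝ) • (2 * x) + (1/2 : ℝ) • (2:ℝ) = x + 1 := by
          simp only [smul_eq_mul]; ring
        rw [heq] at this
        simpa [smul_eq_mul] using this
      have h3 : f (2 * x) ≤ K * f 2 * f x := hsub 2 x (by norm_num) hx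
      have h4 : f 2 ≤ K * f 2 * f 1 := by nlinarith
      have hfx0 : 0 ≤ f x := hfpos x hx
      have hK2 : 0 < K * f 2 := by positivity
      calc K * f (n:ℝ) ≤ K * ((1/2) * (K * f 2 * f x) + (1/2) * (K * f 2 * f 1)) := by
            apply mul_le_mul_of_nonneg_left _ hK.le
            nlinarith
        _ = c * (f x + f 1) := by rw [hc]; ring
        _ = c * (f 1 + f x) := by ring
    -- combine
    calc ∫⁻ y, ENNReal.ofReal (f y) ∂(Q t x)
        = ∫⁻ y, ENNReal.ofReal (f (max y 0)) ∂(Q t x) := e1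
      _ ≤ ∫⁻ y, ENNReal.ofReal (f (max y 0)) ∂(Q t (n : ℝ)) := e2
      _ ≤ ∫⁻ y, ENNReal.ofReal (f (max ((n : ℝ) * y) 0)) ∂(Q t 1) := e3
      _ ≤ ENNReal.ofReal (K * f (n : ℝ)) * I := e4
      _ ≤ ENNReal.ofReal (c * (f 1 + f x)) * I :=
          mul_le_mul_left (ENNReal.ofReal_le_ofReal e5) I
      _ = ENNReal.ofReal c * ((ENNReal.ofReal (f 1) + ENNReal.ofReal (f (max x 0))) * I) := by
          rw [max_eq_left hx, ENNReal.ofReal_mul hc0,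
            ENNReal.ofReal_add (hfpos 1 zero_le_one) (hfpos x hx)]
          ring
  -- integrate over μ
  have hμae : ∀ᵐ x ∂μ, 0 ≤ x := by
    filter_upwards [measure_eq_zero_iff_ae_notMem.mp hμ0] with x hx
    simpa using hx
  have houter : (∫⁻ x, (∫⁻ y, ENNReal.ofReal (f y) ∂(Q t x)) ∂μ)
      ≤ ∫⁻ x, ENNReal.ofReal c * ((ENNReal.ofReal (f 1) + ENNReal.ofReal (f (max x 0))) * I) ∂μ := by
    apply lintegral_mono_ae
    filter_upwards [hμae] with x hx
    exact hpt x hx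
  refine le_trans houter ?_
  have hmeas2 : Measurable (fun x : ℝ => (ENNReal.ofReal (f 1) + ENNReal.ofReal (f (max x 0))) * I) :=
    (measurable_const.add hFmeas).mul_const I
  rw [lintegral_const_mul _ hmeas2]
  rw [lintegral_mul_const'' I (f := fun x => ENNReal.ofReal (f 1) + ENNReal.ofReal (f (max x 0)))
    (measurable_const.add hFmeas).aemeasurable]
  rw [lintegral_add_left measurable_const, lintegral_const, measure_univ, mul_one]
  have hgf : ∫⁻ x, ENNReal.ofReal (f (max x 0)) ∂μ = ∫⁻ x, ENNReal.ofReal (f x) ∂μ := by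
    apply lintegral_congr_ae
    filter_upwards [hμae] with x hx
    rw [max_eq_left hx]
  rw [hgf, ← hI]
end
end

section
/- Let f be an unbounded positive continuous function on [0,∞) satisfying Condition A (with constants c ≥ 0 and K > 0). Then there exists a constant a ≥ 0 such that the function f_a defined by f_a(x) := f(max(a, x)) satisfies Condition B with some constant K' > 0; that is, f_a is convex and nondecreasing on [0,∞), satisfies f_a(xy) ≤ K' f_a(x) f_a(y) for all x, y ≥ 0, and satisfies f_a(x) > 1 for all x ≥ 0. -/
open MeasureTheory Set Filter

noncomputable section

lemma le_of_mid_aux {f : ℝ → ℝ} {c a u : ℝ} (hconv : ConvexOn ℝ (Set.Ici c) f)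
    (hca : c ≤ a) (hau : a ≤ u) (hfa : f c < f a) : f a ≤ f u := by
  have hcu : c ≤ u := hca.trans hau
  have : f a ≤ max (f c) (f u) :=
    hconv.le_on_segment self_mem_Ici (mem_Ici.mpr hcu)
      (by rw [segment_eq_Icc hcu]; exact ⟨hca, hau⟩)
  rcases max_cases (f c) (f u) with ⟨h1, _⟩ | ⟨h1, _⟩
  · rw [h1] at this; linarith
  · rw [h1] at this; exact this

lemma mono_of_conv_aux {f : ℝ → ℝ} {c a : ℝ} (hconv : ConvexOn ℝ (Set.Ici c) f)
    (hca : c < a) (hfa : f c < f a) : MonotoneOn f (Set.Ici a) := by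
  intro u hu w hw huw
  rcases eq_or_lt_of_le huw with rfl | huw
  · exact le_rfl
  have hcu : c < u := hca.trans_le hu
  have hfu : f a ≤ f u := le_of_mid_aux hconv hca.le hu hfa
  have hslope := hconv.slope_mono_adjacent self_mem_Ici
    (mem_Ici.mpr (hcu.le.trans huw.le)) hcu huw
  have h1 : 0 < (f u - f c) / (u - c) := by
    apply div_pos <;> linarith
  have h2 : 0 < (f w - f u) / (w - u) := lt_of_lt_of_le h1 hslope
  rcases div_pos_iff.mp h2 with ⟨h3, _⟩ | ⟨_, h4⟩ <;> linarith

/-- If `f` is an unbounded positive continuous function on `[0,∞)` satisfying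
Condition A, then there is `a ≥ 0` such that `x ↦ f (max a x)` satisfies
Condition B with some constant `K' > 0`. -/
theorem conditionA_to_conditionB
    (f : ℝ → ℝ) (hf : ConditionA f)
    (hub : ∀ M : ℝ, ∃ x, 0 ≤ x ∧ M < f x) :
    ∃ a, 0 ≤ a ∧ ∃ K' : ℝ, ConditionB (fun x => f (max a x)) K' := by
  obtain ⟨hcont, hpos, c, hc0, K, hK, hconv, hsub, M, hM⟩ := hf
  set b := max c 1 with hb
  have hb0 : (0:ℝ) ≤ b := le_trans hc0 (le_max_left c 1)
  obtain ⟨z, hz, hmax⟩ := isCompact_Icc.exists_isMaxOn ⟨0, le_rfl, hb0⟩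
    (hcont.mono (fun x hx => hx.1))
  obtain ⟨a, ha0, hfa⟩ := hub (max (f z) 1)
  have hba : b < a := by
    by_contra h
    push_neg at h
    have hza : f a ≤ f z := hmax ⟨ha0, h⟩
    exact absurd (lt_of_lt_of_le hfa hza) (not_lt.mpr (le_max_left _ _))
  have hca : c < a := lt_of_le_of_lt (le_max_left c 1) hba
  have h1a : (1:ℝ) < a := lt_of_le_of_lt (le_max_right c 1) hba
  have hfc : f c < f a :=
    lt_of_le_of_lt (hmax ⟨hc0, le_max_left c 1⟩) (lt_of_le_of_lt (le_max_left (f z) 1) hfa)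
  have h1f : (1:ℝ) < f a := lt_of_le_of_lt (le_max_right (f z) 1) hfa
  have hmono : MonotoneOn f (Set.Ici a) := mono_of_conv_aux hconv hca hfc
  refine ⟨a, ha0, K, hK, ?_, ?_, ?_, ?_⟩
  · -- convexity
    refine ⟨convex_Ici 0, fun x hx y hy p q hp hq hpq => ?_⟩
    simp only [smul_eq_mul]
    have hax : a ≤ max a x := le_max_left a x
    have hay : a ≤ max a y := le_max_left a y
    have hcomb : a ≤ p * max a x + q * max a y := by nlinarith
    have hle : max a (p * x + q * y) ≤ p * max a x + q * max a y := by
      apply max_le hcomb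
      have := le_max_right a x
      have := le_max_right a y
      nlinarith
    calc f (max a (p * x + q * y)) ≤ f (p * max a x + q * max a y) :=
          hmono (mem_Ici.mpr (le_max_left a _)) (mem_Ici.mpr hcomb) hle
      _ ≤ p * f (max a x) + q * f (max a y) := by
          have := hconv.2 (mem_Ici.mpr (hca.le.trans hax)) (mem_Ici.mpr (hca.le.trans hay))
            hp hq hpq
          simpa using this
  · -- monotone
    intro x _ y _ hxy
    exact hmono (mem_Ici.mpr (le_max_left a x)) (mem_Ici.mpr (le_max_left a y))
      (max_le_max le_rfl hxy)
  · -- submultiplicative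
    intro x y hx hy
    have hax : a ≤ max a x := le_max_left a x
    have hay : a ≤ max a y := le_max_left a y
    have hxm : x ≤ max a x := le_max_right a x
    have hym : y ≤ max a y := le_max_right a y
    have hprod : a ≤ max a x * max a y := by nlinarith
    have hle : max a (x * y) ≤ max a x * max a y := by
      apply max_le hprod
      nlinarith
    calc f (max a (x * y)) ≤ f (max a x * max a y) :=
          hmono (mem_Ici.mpr (le_max_left a _)) (mem_Ici.mpr hprod) hle
      _ ≤ K * f (max a x) * f (max a y) :=
          hsub _ _ (hca.le.trans hax) (hca.le.trans hay)
  · -- greater than 1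
    intro x _
    exact lt_of_lt_of_le h1f
      (hmono (mem_Ici.mpr le_rfl) (mem_Ici.mpr (le_max_left a x)) (le_max_left a x))
end
end
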